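/- Let λ > 0, M > 0, δ = λM > 1 and p < 0 satisfy λe^{pM} = λ + p. Set g₁(x) = (1/M)(1 − e^{px}) for 0 ≤ x ≤ M and g₂(x) = k e^{px} with k = −p/(M(λ+p)). Then for all x ≥ M, g₂(x) = ∫₀^M λe^{−λ(x−u)} g₁(u) du + ∫_M^{M+x} λe^{−λ(x−u+M)} g₂(u) du. -/

import Mathlib

open Real MeasureTheory

/-- Second balance (integral) equation satisfied by the infinite-buffer limiting density on
`[M, ∞)`: `g₂(x) = ∫₀^M λe^{-λ(x-u)} g₁(u) du + ∫_M^{M+x} λe^{-λ(x-u+M)} g₂(u) du`. -/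
theorem stmt5 (lam M p : ℝ) (hlam : 0 < lam) (hM : 0 < M) (hδ : 1 < lam * M)
    (hp : p < 0) (heq : lam * Real.exp (p * M) = lam + p)
    (k : ℝ) (hk : k = -p / (M * (lam + p)))
    (g₁ g₂ : ℝ → ℝ)
    (hg₁ : ∀ x, 0 ≤ x → x ≤ M → g₁ x = (1 / M) * (1 - Real.exp (p * x)))
    (hg₂ : ∀ x, g₂ x = k * Real.exp (p * x)) :
    ∀ x, M ≤ x →
      g₂ x = (∫ u in (0 : ℝ)..M, lam * Real.exp (-lam * (x - u)) * g₁ u) +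
        (∫ u in M..(M + x), lam * Real.exp (-lam * (x - u + M)) * g₂ u) := by
  intro x hx
  have hlp : 0 < lam + p := by
    rw [← heq]; positivity
  have hlp' : lam + p ≠ 0 := ne_of_gt hlp
  -- rewrite integrands
  have h1 : (∫ u in (0 : ℝ)..M, lam * Real.exp (-lam * (x - u)) * g₁ u)
      = ∫ u in (0 : ℝ)..M,
        lam * Real.exp (-lam * (x - u)) * ((1 / M) * (1 - Real.exp (p * u))) := by
    apply intervalIntegral.integral_congr
    intro u hu
    rw [Set.uIcc_of_le hM.le] at hu
    simp only [hg₁ u hu.1 hu.2]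
  have h2 : (∫ u in M..(M + x), lam * Real.exp (-lam * (x - u + M)) * g₂ u)
      = ∫ u in M..(M + x),
        lam * Real.exp (-lam * (x - u + M)) * (k * Real.exp (p * u)) := by
    apply intervalIntegral.integral_congr
    intro u _
    simp only [hg₂ u]
  rw [h1, h2, hg₂]
  -- antiderivatives
  set F₁ : ℝ → ℝ := fun u =>
    (1 / M) * Real.exp (-lam * (x - u)) -
      (lam / (M * (lam + p))) * Real.exp (-lam * (x - u) + p * u) with hF₁
  set F₂ : ℝ → ℝ := fun u =>
    (lam * k / (lam + p)) * Real.exp (-lam * (x - u + M) + p * u) with hF₂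
  have hd1 : ∀ u ∈ Set.uIcc (0 : ℝ) M, HasDerivAt F₁
      (lam * Real.exp (-lam * (x - u)) * ((1 / M) * (1 - Real.exp (p * u)))) u := by
    intro u _
    have e1 : HasDerivAt (fun u : ℝ => -lam * (x - u)) lam u := by
      refine (((hasDerivAt_const u x).sub (hasDerivAt_id u)).const_mul (-lam)).congr_deriv ?_
      ring
    have e2 : HasDerivAt (fun u : ℝ => -lam * (x - u) + p * u) (lam + p) u := by
      refine (e1.add ((hasDerivAt_id u).const_mul p)).congr_deriv ?_
      simp
    have d1 := (e1.exp.const_mul (1 / M)).sub (e2.exp.const_mul (lam / (M * (lam + p))))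
    refine d1.congr_deriv ?_
    rw [Real.exp_add]
    field_simp
  have hd2 : ∀ u ∈ Set.uIcc M (M + x), HasDerivAt F₂
      (lam * Real.exp (-lam * (x - u + M)) * (k * Real.exp (p * u))) u := by
    intro u _
    have e1 : HasDerivAt (fun u : ℝ => -lam * (x - u + M) + p * u) (lam + p) u := by
      refine (((((hasDerivAt_const u x).sub (hasDerivAt_id u)).add_const M).const_mul
        (-lam)).add ((hasDerivAt_id u).const_mul p)).congr_deriv ?_
      simp
    have d2 := e1.exp.const_mul (lam * k / (lam + p))
    refine d2.congr_deriv ?_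
    rw [Real.exp_add]
    field_simp
  have hc1 : IntervalIntegrable
      (fun u => lam * Real.exp (-lam * (x - u)) * ((1 / M) * (1 - Real.exp (p * u))))
      MeasureTheory.volume 0 M := by
    apply Continuous.intervalIntegrable; fun_prop
  have hc2 : IntervalIntegrable
      (fun u => lam * Real.exp (-lam * (x - u + M)) * (k * Real.exp (p * u)))
      MeasureTheory.volume M (M + x) := by
    apply Continuous.intervalIntegrable; fun_prop
  rw [intervalIntegral.integral_eq_sub_of_hasDerivAt hd1 hc1,
    intervalIntegral.integral_eq_sub_of_hasDerivAt hd2 hc2]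
  simp only [hF₁, hF₂]
  have eA : Real.exp (-lam * (x - M)) = Real.exp (lam * M) * Real.exp (-lam * x) := by
    rw [← Real.exp_add]; ring_nf
  have eB : Real.exp (-lam * (x - M) + p * M)
      = Real.exp (lam * M) * Real.exp (p * M) * Real.exp (-lam * x) := by
    rw [← Real.exp_add, ← Real.exp_add]; ring_nf
  have eC : Real.exp (-lam * (x - (M + x) + M) + p * (M + x))
      = Real.exp (p * M) * Real.exp (p * x) := by
    rw [← Real.exp_add]; ring_nf
  have eD : Real.exp (-lam * (x - M + M) + p * M)
      = Real.exp (p * M) * Real.exp (-lam * x) := by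
    rw [← Real.exp_add]; ring_nf
  have eE : Real.exp (-lam * (x - 0)) = Real.exp (-lam * x) := by ring_nf
  have eF : Real.exp (-lam * (x - 0) + p * 0) = Real.exp (-lam * x) := by ring_nf
  have hpm : Real.exp (p * M) = (lam + p) / lam := by
    rw [eq_div_iff hlam.ne']
    linarith [heq]
  rw [eA, eB, eC, eD, eE, eF, hk, hpm]
  have hM' : M ≠ 0 := ne_of_gt hM
  field_simp
  ring
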